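/- arXiv:2209.01505 — 2 statements merged into one kernel-verified Lean document; each statement's English description precedes it below -/
import Mathlib

section
/- For d ≥ 1 natural numbers j_1,...,j_d and any integer N, the product Π_{i=1}^d N^(j_i) of falling factorials equals the iterated sum Σ_{ℓ_2=0}^{j_2} Σ_{ℓ_3=0}^{j_3} ... Σ_{ℓ_d=0}^{j_d} N^(Σ_{i=1}^d j_i − Σ_{i=2}^d ℓ_i) · Π_{i=2}^d [ C(Σ_{ν=1}^{i−1} j_ν − Σ_{ν=2}^{i−1} ℓ_ν, ℓ_i) · C(j_i, ℓ_i) · ℓ_i! ], with the convention that an empty sum equals 0. -/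
/-- Falling factorial on the integers: `fallFacZ x j = x (x-1) ⋯ (x-j+1)`, with
`fallFacZ x 0 = 1`. -/
def fallFacZ (x : ℤ) : ℕ → ℤ
  | 0 => 1
  | n + 1 => fallFacZ x n * (x - n)

lemma fallFacZ_succ (N : ℤ) (a : ℕ) : fallFacZ N (a+1) = fallFacZ N a * (N - a) := rfl

lemma coeff_key (a m : ℕ) :
    (a.choose (m+1) : ℤ) * ((m:ℤ)+1) = (a.choose m : ℤ) * ((a:ℤ) - m) := by
  rcases le_or_gt a m with h | h
  · rcases eq_or_lt_of_le h with rfl | h'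
    · simp [Nat.choose_succ_self]
    · simp [Nat.choose_eq_zero_of_lt h', Nat.choose_eq_zero_of_lt (h'.trans (Nat.lt_succ_self m))]
  · have h1 := congrArg (Nat.cast : ℕ → ℤ) (Nat.choose_succ_right_eq a m)
    push_cast [Nat.cast_sub h.le] at h1
    linarith

lemma fallFacZ_mul (N : ℤ) (a b : ℕ) :
    fallFacZ N a * fallFacZ N b =
      ∑ ℓ ∈ Finset.range (b+1),
        (a.choose ℓ : ℤ) * (b.choose ℓ : ℤ) * (ℓ.factorial : ℤ) * fallFacZ N (a + b - ℓ) := by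
  induction b with
  | zero => simp [fallFacZ]
  | succ b ih =>
    rw [fallFacZ_succ, ← mul_assoc, ih, Finset.sum_mul]
    have expand : ∀ ℓ ∈ Finset.range (b+1),
        (a.choose ℓ : ℤ) * (b.choose ℓ : ℤ) * (ℓ.factorial : ℤ) * fallFacZ N (a + b - ℓ) * (N - b)
        = (a.choose ℓ : ℤ) * (b.choose ℓ : ℤ) * (ℓ.factorial : ℤ) * fallFacZ N (a + b + 1 - ℓ)
          + ((a.choose ℓ : ℤ) * (b.choose ℓ : ℤ) * (ℓ.factorial : ℤ) * ((a:ℤ) - ℓ)) * fallFacZ N (a + b - ℓ) := by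
      intro ℓ hℓ
      have hℓb : ℓ ≤ b := Nat.lt_succ_iff.mp (Finset.mem_range.mp hℓ)
      have h1 : a + b + 1 - ℓ = (a + b - ℓ) + 1 := by omega
      rw [h1, fallFacZ_succ]
      have h2 : ((a + b - ℓ : ℕ) : ℤ) = (a:ℤ) + b - ℓ := by
        have : ℓ ≤ a + b := by omega
        push_cast [Nat.cast_sub this]; ring
      rw [h2]; ring
    rw [Finset.sum_congr rfl expand, Finset.sum_add_distrib]
    -- rewrite first sum via index shift
    have hsumA : (∑ ℓ ∈ Finset.range (b+1),
        (a.choose ℓ : ℤ) * (b.choose ℓ : ℤ) * (ℓ.factorial : ℤ) * fallFacZ N (a + b + 1 - ℓ))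
        = (∑ ℓ ∈ Finset.range (b+1),
            (a.choose (ℓ+1) : ℤ) * (b.choose (ℓ+1) : ℤ) * ((ℓ+1).factorial : ℤ) * fallFacZ N (a + b - ℓ))
          + fallFacZ N (a + b + 1) := by
      rw [Finset.sum_range_succ' _ b]
      rw [Finset.sum_range_succ]
      simp only [Nat.choose_succ_self, Nat.cast_zero, mul_zero, zero_mul, add_zero]
      congr 1
      · apply Finset.sum_congr rfl
        intro ℓ hℓ
        have : a + b + 1 - (ℓ + 1) = a + b - ℓ := by omega
        rw [this]
      · simp
    rw [hsumA]
    -- RHS via index shift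
    rw [Finset.sum_range_succ' _ (b+1)]
    have hRHS0 : (a.choose 0 : ℤ) * ((b+1).choose 0 : ℤ) * ((0:ℕ).factorial : ℤ) *
        fallFacZ N (a + (b+1) - 0) = fallFacZ N (a + b + 1) := by
      have h0 : a + (b+1) - 0 = a + b + 1 := by omega
      rw [h0]; simp
    rw [hRHS0]
    rw [add_right_comm, ← Finset.sum_add_distrib]
    congr 1
    apply Finset.sum_congr rfl
    intro ℓ hℓ
    have h3 : a + (b+1) - (ℓ+1) = a + b - ℓ := by omega
    rw [h3, Nat.choose_succ_succ b ℓ]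
    have key := coeff_key a ℓ
    have hfact : (((ℓ:ℕ)+1).factorial : ℤ) = (ℓ.factorial : ℤ) * ((ℓ:ℤ)+1) := by
      push_cast [Nat.factorial_succ]; ring
    push_cast [hfact]
    linear_combination -(fallFacZ N (a + b - ℓ) * (b.choose ℓ : ℤ) * (ℓ.factorial : ℤ)) * key

lemma sum_filter_lt_castSucc {M : Type*} [AddCommMonoid M] {e : ℕ} (i : Fin (e+1))
    (g : Fin (e+2) → M) :
    ∑ ν ∈ Finset.univ.filter (fun ν : Fin (e+2) => ν < i.castSucc), g ν
      = ∑ ν ∈ Finset.univ.filter (fun ν : Fin (e+1) => ν < i), g ν.castSucc := by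
  rw [Finset.sum_filter, Finset.sum_filter, Fin.sum_univ_castSucc]
  rw [if_neg (not_lt.mpr (Fin.castSucc_lt_last i).le), add_zero]
  simp [Fin.castSucc_lt_castSucc_iff]

lemma sum_filter_lt_last {M : Type*} [AddCommMonoid M] {e : ℕ} (g : Fin (e+2) → M) :
    ∑ ν ∈ Finset.univ.filter (fun ν : Fin (e+2) => ν < Fin.last (e+1)), g ν
      = ∑ ν : Fin (e+1), g ν.castSucc := by
  rw [Finset.sum_filter, Fin.sum_univ_castSucc, if_neg (lt_irrefl _), add_zero]
  simp [Fin.castSucc_lt_last]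

lemma aux_base (j : Fin 1 → ℕ) (N : ℤ) :
    ∏ i, fallFacZ N (j i) =
      ∑ ℓ ∈ (Fintype.piFinset fun i : Fin 1 => Finset.range (j i + 1)).filter
          (fun ℓ => ℓ ⟨0, Nat.succ_pos 0⟩ = 0),
        fallFacZ N (∑ i, j i - ∑ i, ℓ i) *
          ∏ i ∈ Finset.univ.filter (fun i : Fin 1 => i ≠ ⟨0, Nat.succ_pos 0⟩),
            ((Nat.choose
                  (∑ ν ∈ Finset.univ.filter (fun ν : Fin 1 => ν < i), j ν -
                    ∑ ν ∈ Finset.univ.filter (fun ν : Fin 1 => ν < i), ℓ ν) (ℓ i) : ℤ) *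
              (Nat.choose (j i) (ℓ i) : ℤ) * (Nat.factorial (ℓ i) : ℤ)) := by
  have hset : (Fintype.piFinset fun i : Fin 1 => Finset.range (j i + 1)).filter
      (fun ℓ => ℓ ⟨0, Nat.succ_pos 0⟩ = 0) = {fun _ => 0} := by
    ext ℓ
    simp only [Finset.mem_filter, Fintype.mem_piFinset, Finset.mem_range, Finset.mem_singleton]
    constructor
    · rintro ⟨-, h0⟩
      funext i
      have : i = ⟨0, Nat.succ_pos 0⟩ := Subsingleton.elim _ _
      rw [this, h0]
    · rintro rfl
      exact ⟨fun i => Nat.succ_pos _, rfl⟩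
  rw [hset, Finset.sum_singleton]
  have hempty : Finset.univ.filter (fun i : Fin 1 => i ≠ ⟨0, Nat.succ_pos 0⟩) = ∅ := by
    ext i
    simp [Subsingleton.elim i ⟨0, Nat.succ_pos 0⟩]
  rw [hempty, Finset.prod_empty, mul_one]
  simp [Fin.sum_univ_one]

lemma fallFacZ_succ' (N : ℤ) (a : ℕ) : fallFacZ N (a+1) = fallFacZ N a * (N - a) := rfl

lemma cast_zero_eq (e : ℕ) :
    Fin.castSucc (⟨0, Nat.succ_pos e⟩ : Fin (e+1)) = (⟨0, Nat.succ_pos (e+1)⟩ : Fin (e+2)) := rfl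

lemma step_term (e : ℕ) (j : Fin (e+2) → ℕ) (N : ℤ) (ℓ' : Fin (e+1) → ℕ)
    (hb : ∀ i, ℓ' i ≤ j i.castSucc) (m : ℕ) (hm : m ≤ j (Fin.last (e+1))) :
    (Nat.choose (∑ i : Fin (e+1), j i.castSucc - ∑ i, ℓ' i) m : ℤ) *
        (Nat.choose (j (Fin.last (e+1))) m : ℤ) * (Nat.factorial m : ℤ) *
        fallFacZ N ((∑ i : Fin (e+1), j i.castSucc - ∑ i, ℓ' i) + j (Fin.last (e+1)) - m) *
        ∏ i ∈ Finset.univ.filter (fun i : Fin (e+1) => i ≠ ⟨0, Nat.succ_pos e⟩),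
          ((Nat.choose
                (∑ ν ∈ Finset.univ.filter (fun ν : Fin (e+1) => ν < i), (fun i => j i.castSucc) ν -
                  ∑ ν ∈ Finset.univ.filter (fun ν : Fin (e+1) => ν < i), ℓ' ν) (ℓ' i) : ℤ) *
            (Nat.choose (j i.castSucc) (ℓ' i) : ℤ) * (Nat.factorial (ℓ' i) : ℤ))
      = fallFacZ N (∑ i, j i - ∑ i, (Fin.snoc ℓ' m : Fin (e+2) → ℕ) i) *
          ∏ i ∈ Finset.univ.filter (fun i : Fin (e+2) => i ≠ ⟨0, Nat.succ_pos (e+1)⟩),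
            ((Nat.choose
                  (∑ ν ∈ Finset.univ.filter (fun ν : Fin (e+2) => ν < i), j ν -
                    ∑ ν ∈ Finset.univ.filter (fun ν : Fin (e+2) => ν < i),
                      (Fin.snoc ℓ' m : Fin (e+2) → ℕ) ν) ((Fin.snoc ℓ' m : Fin (e+2) → ℕ) i) : ℤ) *
              (Nat.choose (j i) ((Fin.snoc ℓ' m : Fin (e+2) → ℕ) i) : ℤ) *
              (Nat.factorial ((Fin.snoc ℓ' m : Fin (e+2) → ℕ) i) : ℤ)) := by
  have hsum_le : ∑ i, ℓ' i ≤ ∑ i : Fin (e+1), j i.castSucc := Finset.sum_le_sum fun i _ => hb i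
  -- sums over Fin (e+2)
  have hJ : ∑ i, j i = ∑ i : Fin (e+1), j i.castSucc + j (Fin.last (e+1)) := Fin.sum_univ_castSucc j
  have hL : ∑ i, (Fin.snoc ℓ' m : Fin (e+2) → ℕ) i = ∑ i, ℓ' i + m := by
    rw [Fin.sum_univ_castSucc]
    simp [Fin.snoc_castSucc, Fin.snoc_last]
  have harg : ∑ i, j i - ∑ i, (Fin.snoc ℓ' m : Fin (e+2) → ℕ) i
      = (∑ i : Fin (e+1), j i.castSucc - ∑ i, ℓ' i) + j (Fin.last (e+1)) - m := by
    rw [hJ, hL]; omega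
  rw [harg]
  have hlast_ne : (Fin.last (e+1) : Fin (e+2)) ≠ ⟨0, Nat.succ_pos (e+1)⟩ := by
    simp [Fin.ext_iff]
  have hcs_ne : ∀ i : Fin (e+1),
      (Fin.castSucc i ≠ (⟨0, Nat.succ_pos (e+1)⟩ : Fin (e+2))) ↔ i ≠ ⟨0, Nat.succ_pos e⟩ := by
    intro i; rw [Ne, Ne, Fin.ext_iff, Fin.ext_iff]; exact Iff.rfl
  -- the last factor
  have hflast : ∑ ν ∈ Finset.univ.filter (fun ν : Fin (e+2) => ν < Fin.last (e+1)), j ν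
      = ∑ i : Fin (e+1), j i.castSucc := sum_filter_lt_last j
  have hflast' : ∑ ν ∈ Finset.univ.filter (fun ν : Fin (e+2) => ν < Fin.last (e+1)),
      (Fin.snoc ℓ' m : Fin (e+2) → ℕ) ν = ∑ i, ℓ' i := by
    rw [sum_filter_lt_last]
    simp [Fin.snoc_castSucc]
  -- the castSucc factors
  have hfac : ∀ i : Fin (e+1),
      (if Fin.castSucc i ≠ (⟨0, Nat.succ_pos (e+1)⟩ : Fin (e+2)) then
        ((Nat.choose
              (∑ ν ∈ Finset.univ.filter (fun ν : Fin (e+2) => ν < Fin.castSucc i), j ν -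
                ∑ ν ∈ Finset.univ.filter (fun ν : Fin (e+2) => ν < Fin.castSucc i),
                  (Fin.snoc ℓ' m : Fin (e+2) → ℕ) ν) ((Fin.snoc ℓ' m : Fin (e+2) → ℕ) (Fin.castSucc i)) : ℤ) *
          (Nat.choose (j (Fin.castSucc i)) ((Fin.snoc ℓ' m : Fin (e+2) → ℕ) (Fin.castSucc i)) : ℤ) *
          (Nat.factorial ((Fin.snoc ℓ' m : Fin (e+2) → ℕ) (Fin.castSucc i)) : ℤ)) else 1)
      = (if i ≠ (⟨0, Nat.succ_pos e⟩ : Fin (e+1)) then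
          ((Nat.choose
              (∑ ν ∈ Finset.univ.filter (fun ν : Fin (e+1) => ν < i), j ν.castSucc -
                ∑ ν ∈ Finset.univ.filter (fun ν : Fin (e+1) => ν < i), ℓ' ν) (ℓ' i) : ℤ) *
          (Nat.choose (j i.castSucc) (ℓ' i) : ℤ) * (Nat.factorial (ℓ' i) : ℤ)) else 1) := by
    intro i
    rw [sum_filter_lt_castSucc i j, sum_filter_lt_castSucc i (Fin.snoc ℓ' m), Fin.snoc_castSucc]
    have : ∑ ν ∈ Finset.univ.filter (fun ν : Fin (e+1) => ν < i),
        (Fin.snoc ℓ' m : Fin (e+2) → ℕ) ν.castSucc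
        = ∑ ν ∈ Finset.univ.filter (fun ν : Fin (e+1) => ν < i), ℓ' ν := by
      apply Finset.sum_congr rfl; intro ν _; exact Fin.snoc_castSucc _ _ _
    rw [this]
    by_cases h : i = (⟨0, Nat.succ_pos e⟩ : Fin (e+1))
    · rw [if_neg (by simpa [hcs_ne i] using h), if_neg (by simpa using h)]
    · rw [if_pos ((hcs_ne i).mpr h), if_pos h]
  have hP : (∏ i ∈ Finset.univ.filter (fun i : Fin (e+2) => i ≠ ⟨0, Nat.succ_pos (e+1)⟩),
        ((Nat.choose
              (∑ ν ∈ Finset.univ.filter (fun ν : Fin (e+2) => ν < i), j ν -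
                ∑ ν ∈ Finset.univ.filter (fun ν : Fin (e+2) => ν < i),
                  (Fin.snoc ℓ' m : Fin (e+2) → ℕ) ν) ((Fin.snoc ℓ' m : Fin (e+2) → ℕ) i) : ℤ) *
          (Nat.choose (j i) ((Fin.snoc ℓ' m : Fin (e+2) → ℕ) i) : ℤ) *
          (Nat.factorial ((Fin.snoc ℓ' m : Fin (e+2) → ℕ) i) : ℤ)))
      = (∏ i ∈ Finset.univ.filter (fun i : Fin (e+1) => i ≠ ⟨0, Nat.succ_pos e⟩),
          ((Nat.choose
              (∑ ν ∈ Finset.univ.filter (fun ν : Fin (e+1) => ν < i), j ν.castSucc -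
                ∑ ν ∈ Finset.univ.filter (fun ν : Fin (e+1) => ν < i), ℓ' ν) (ℓ' i) : ℤ) *
          (Nat.choose (j i.castSucc) (ℓ' i) : ℤ) * (Nat.factorial (ℓ' i) : ℤ))) *
        ((Nat.choose (∑ i : Fin (e+1), j i.castSucc - ∑ i, ℓ' i) m : ℤ) *
          (Nat.choose (j (Fin.last (e+1))) m : ℤ) * (Nat.factorial m : ℤ)) := by
    rw [Finset.prod_filter, Fin.prod_univ_castSucc, if_pos hlast_ne, hflast, hflast',
      Fin.snoc_last, Finset.prod_congr rfl (fun i _ => hfac i), ← Finset.prod_filter]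
  rw [hP]
  ring

lemma aux (e : ℕ) : ∀ (j : Fin (e+1) → ℕ) (N : ℤ),
    ∏ i, fallFacZ N (j i) =
      ∑ ℓ ∈ (Fintype.piFinset fun i : Fin (e+1) => Finset.range (j i + 1)).filter
          (fun ℓ => ℓ ⟨0, Nat.succ_pos e⟩ = 0),
        fallFacZ N (∑ i, j i - ∑ i, ℓ i) *
          ∏ i ∈ Finset.univ.filter (fun i : Fin (e+1) => i ≠ ⟨0, Nat.succ_pos e⟩),
            ((Nat.choose
                  (∑ ν ∈ Finset.univ.filter (fun ν : Fin (e+1) => ν < i), j ν -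
                    ∑ ν ∈ Finset.univ.filter (fun ν : Fin (e+1) => ν < i), ℓ ν) (ℓ i) : ℤ) *
              (Nat.choose (j i) (ℓ i) : ℤ) * (Nat.factorial (ℓ i) : ℤ)) := by
  induction e with
  | zero => exact fun j N => aux_base j N
  | succ e ih =>
    intro j N
    rw [Fin.prod_univ_castSucc, ih (fun i => j i.castSucc) N, Finset.sum_mul]
    have hexp : ∀ ℓ' ∈ (Fintype.piFinset fun i : Fin (e+1) =>
        Finset.range (j i.castSucc + 1)).filter (fun ℓ => ℓ ⟨0, Nat.succ_pos e⟩ = 0),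
        (fallFacZ N (∑ i : Fin (e+1), j i.castSucc - ∑ i, ℓ' i) *
          ∏ i ∈ Finset.univ.filter (fun i : Fin (e+1) => i ≠ ⟨0, Nat.succ_pos e⟩),
            ((Nat.choose
                  (∑ ν ∈ Finset.univ.filter (fun ν : Fin (e+1) => ν < i),
                      (fun i => j i.castSucc) ν -
                    ∑ ν ∈ Finset.univ.filter (fun ν : Fin (e+1) => ν < i), ℓ' ν) (ℓ' i) : ℤ) *
              (Nat.choose (j i.castSucc) (ℓ' i) : ℤ) * (Nat.factorial (ℓ' i) : ℤ))) *
          fallFacZ N (j (Fin.last (e+1)))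
        = ∑ m ∈ Finset.range (j (Fin.last (e+1)) + 1),
            (Nat.choose (∑ i : Fin (e+1), j i.castSucc - ∑ i, ℓ' i) m : ℤ) *
              (Nat.choose (j (Fin.last (e+1))) m : ℤ) * (Nat.factorial m : ℤ) *
              fallFacZ N ((∑ i : Fin (e+1), j i.castSucc - ∑ i, ℓ' i) + j (Fin.last (e+1)) - m) *
              ∏ i ∈ Finset.univ.filter (fun i : Fin (e+1) => i ≠ ⟨0, Nat.succ_pos e⟩),
                ((Nat.choose
                      (∑ ν ∈ Finset.univ.filter (fun ν : Fin (e+1) => ν < i),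
                          (fun i => j i.castSucc) ν -
                        ∑ ν ∈ Finset.univ.filter (fun ν : Fin (e+1) => ν < i), ℓ' ν) (ℓ' i) : ℤ) *
                  (Nat.choose (j i.castSucc) (ℓ' i) : ℤ) * (Nat.factorial (ℓ' i) : ℤ)) := by
      intro ℓ' _
      rw [mul_right_comm, fallFacZ_mul, Finset.sum_mul]
    rw [Finset.sum_congr rfl hexp, ← Finset.sum_product']
    refine Finset.sum_bij' (fun x _ => (Fin.snoc x.1 x.2 : Fin (e+2) → ℕ))
      (fun ℓ _ => (Fin.init ℓ, ℓ (Fin.last (e+1)))) ?_ ?_ ?_ ?_ ?_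
    · rintro ⟨ℓ', m⟩ hx
      rw [Finset.mem_product] at hx
      obtain ⟨h1, h2⟩ := hx
      rw [Finset.mem_filter] at h1 ⊢
      rw [Fintype.mem_piFinset] at h1 ⊢
      obtain ⟨hpi, h0⟩ := h1
      refine ⟨?_, ?_⟩
      · intro a
        dsimp only
        refine Fin.lastCases ?_ ?_ a
        · rw [Fin.snoc_last]; exact h2
        · intro i; rw [Fin.snoc_castSucc]; exact hpi i
      · dsimp only
        rw [← cast_zero_eq, Fin.snoc_castSucc]; exact h0
    · intro ℓ hℓ
      rw [Finset.mem_filter, Fintype.mem_piFinset] at hℓ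
      obtain ⟨hpi, h0⟩ := hℓ
      rw [Finset.mem_product]
      constructor
      · rw [Finset.mem_filter, Fintype.mem_piFinset]
        exact ⟨fun i => hpi i.castSucc, by show ℓ _ = 0; rw [cast_zero_eq]; exact h0⟩
      · exact hpi (Fin.last (e+1))
    · rintro ⟨ℓ', m⟩ _
      dsimp only
      simp [Fin.init_snoc, Fin.snoc_last]
    · intro ℓ _
      dsimp only
      exact Fin.snoc_init_self ℓ
    · rintro ⟨ℓ', m⟩ hx
      rw [Finset.mem_product] at hx
      obtain ⟨h1, h2⟩ := hx
      rw [Finset.mem_filter, Fintype.mem_piFinset] at h1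
      have hb : ∀ i, ℓ' i ≤ j i.castSucc := fun i =>
        Nat.lt_succ_iff.mp (Finset.mem_range.mp (h1.1 i))
      have hm : m ≤ j (Fin.last (e+1)) := Nat.lt_succ_iff.mp (Finset.mem_range.mp h2)
      dsimp only
      exact step_term e j N ℓ' hb m hm


/-- Product of falling factorials `∏_{i=1}^d N^{(j_i)}` expanded as an iterated sum over
`ℓ_2, …, ℓ_d` (encoded as a sum over tuples `ℓ : Fin d → ℕ` with `ℓ 0 = 0`). -/
theorem prod_fallFac_eq_sum (d : ℕ) (hd : 1 ≤ d) (j : Fin d → ℕ) (N : ℤ) :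
    ∏ i, fallFacZ N (j i) =
      ∑ ℓ ∈ (Fintype.piFinset fun i : Fin d => Finset.range (j i + 1)).filter
          (fun ℓ => ℓ ⟨0, hd⟩ = 0),
        fallFacZ N (∑ i, j i - ∑ i, ℓ i) *
          ∏ i ∈ Finset.univ.filter (fun i : Fin d => i ≠ ⟨0, hd⟩),
            ((Nat.choose
                  (∑ ν ∈ Finset.univ.filter (fun ν : Fin d => ν < i), j ν -
                    ∑ ν ∈ Finset.univ.filter (fun ν : Fin d => ν < i), ℓ ν) (ℓ i) : ℤ) *
              (Nat.choose (j i) (ℓ i) : ℤ) * (Nat.factorial (ℓ i) : ℤ)) := by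
  obtain ⟨e, rfl⟩ : ∃ e, d = e + 1 := ⟨d - 1, by omega⟩
  exact aux e j N
end

section
/- For every m ∈ ℕ and every p ∈ (0,1), the limit as N → ∞ of N^{−m} · E[(ξ_N − Np)^{2m}] equals (2m−1)!! · (p − p²)^m, where ξ_N ∼ Binomial(N,p) and (2m−1)!! = (2m)!/(2^m m!). -/
open Filter

/-- Probability mass function of the `Binomial(N, p)` distribution. -/
def binPMF (N : ℕ) (p : ℝ) (k : ℕ) : ℝ :=
  (N.choose k : ℝ) * p ^ k * (1 - p) ^ (N - k)

/-- Expectation of `f ξ` for `ξ ∼ Binomial(N, p)`. -/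
def binExp (N : ℕ) (p : ℝ) (f : ℕ → ℝ) : ℝ :=
  ∑ k ∈ Finset.range (N + 1), binPMF N p k * f k

open Finset Asymptotics Topology


lemma w_eq (k n : ℕ) : ((n : ℝ) + 1) ^ (k + 1) - (n : ℝ) ^ (k + 1)
    = ∑ j ∈ range (k + 1), (n : ℝ) ^ j * (Nat.choose (k+1) j : ℝ) := by
  have h := add_pow (n : ℝ) 1 (k + 1)
  simp only [one_pow, mul_one] at h
  rw [h, Finset.sum_range_succ]
  simp

lemma pow_ratio_tendsto (k : ℕ) :
    Tendsto (fun n : ℕ => (((n : ℝ) + 1) ^ (k + 1) - (n : ℝ) ^ (k + 1)) / (n : ℝ) ^ k)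
      atTop (𝓝 ((k : ℝ) + 1)) := by
  have h1 : Tendsto (fun n : ℕ =>
      ∑ j ∈ range (k + 1), (Nat.choose (k+1) j : ℝ) * ((n : ℝ) ^ j / (n : ℝ) ^ k))
      atTop (𝓝 (∑ j ∈ range (k + 1), if j = k then ((k:ℝ)+1) else 0)) := by
    apply tendsto_finset_sum
    intro j hj
    rcases eq_or_lt_of_le (Nat.lt_succ_iff.mp (Finset.mem_range.mp hj)) with h | h
    · subst h
      have hch : (Nat.choose (j+1) j : ℝ) = (j:ℝ)+1 := by
        rw [Nat.choose_succ_self_right]; push_cast; ring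
      apply tendsto_const_nhds.congr'
      filter_upwards [eventually_ge_atTop 1] with n hn
      have hne : ((n:ℝ)^j) ≠ 0 := by positivity
      simp [div_self hne, hch]
    · simp only [if_neg h.ne]
      have h2 := (tendsto_pow_div_pow_atTop_zero (𝕜 := ℝ) h).comp tendsto_natCast_atTop_atTop
      have h3 := h2.const_mul ((Nat.choose (k+1) j : ℝ))
      simpa [Function.comp] using h3
  have h2 : (∑ j ∈ range (k + 1), if j = k then ((k:ℝ)+1) else 0) = (k : ℝ) + 1 := by
    rw [Finset.sum_ite_eq' (range (k+1)) k (fun _ => ((k:ℝ)+1))]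
    simp
  rw [h2] at h1
  apply h1.congr
  intro n
  rw [w_eq k n, Finset.sum_div]
  congr 1; ext j; ring

lemma stolz {u : ℕ → ℝ} {k : ℕ} {L : ℝ}
    (h : Tendsto (fun n => (u (n+1) - u n) / (n : ℝ) ^ k) atTop (𝓝 L)) :
    Tendsto (fun n => u n / (n : ℝ) ^ (k+1)) atTop (𝓝 (L / ((k : ℝ)+1))) := by
  set c : ℝ := L / ((k:ℝ)+1) with hc
  set w : ℕ → ℝ := fun n => ((n : ℝ) + 1) ^ (k + 1) - (n : ℝ) ^ (k + 1) with hwdef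
  have hkpos : (0:ℝ) < (k:ℝ) + 1 := by positivity
  have hwpos : ∀ n : ℕ, (n:ℝ)^k ≤ w n := by
    intro n
    have hexp : w n = ∑ j ∈ range (k + 1), (n : ℝ) ^ j * (Nat.choose (k+1) j : ℝ) := w_eq k n
    rw [hexp]
    calc ((n:ℝ))^k ≤ (n:ℝ)^k * (Nat.choose (k+1) k : ℝ) := by
          rw [Nat.choose_succ_self_right]
          push_cast
          nlinarith [pow_nonneg (Nat.cast_nonneg (α := ℝ) n) k, Nat.cast_nonneg (α := ℝ) k]
      _ ≤ _ := Finset.single_le_sum (f := fun j => (n : ℝ) ^ j * (Nat.choose (k+1) j : ℝ))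
          (fun j _ => by positivity) (by simp)
  have hwnn : ∀ n : ℕ, 0 ≤ w n := fun n => le_trans (by positivity) (hwpos n)
  have hsumw : ∀ n : ℕ, ∑ i ∈ range n, w i = (n : ℝ) ^ (k+1) := by
    intro n
    have h5 := Finset.sum_range_sub (fun i : ℕ => (i : ℝ) ^ (k+1)) n
    simp only [Nat.cast_add, Nat.cast_one] at h5
    simp only [hwdef]
    exact h5.trans (by norm_num)
  have hdw : Tendsto (fun n : ℕ => (u (n+1) - u n - c * w n) / (n:ℝ)^k) atTop (𝓝 0) := by
    have h3 : Tendsto (fun n : ℕ => c * (w n / (n:ℝ)^k)) atTop (𝓝 (c * ((k:ℝ)+1))) :=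
      (pow_ratio_tendsto k).const_mul c
    have h4 := h.sub h3
    have hval : L - c * ((k:ℝ)+1) = 0 := by
      rw [hc]; field_simp; ring
    rw [hval] at h4
    apply h4.congr
    intro n; ring
  have hlo : (fun n => u (n+1) - u n - c * w n) =o[atTop] w := by
    have h1 : (fun n => u (n+1) - u n - c * w n) =o[atTop] (fun n : ℕ => (n:ℝ)^k) := by
      rw [isLittleO_iff_tendsto']
      · exact hdw
      · filter_upwards [eventually_ge_atTop 1] with n hn hn0
        exact absurd hn0 (by positivity)
    exact h1.trans_isBigO (isBigO_of_le _ (fun n => by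
      rw [Real.norm_eq_abs, Real.norm_eq_abs, abs_of_nonneg (by positivity),
        abs_of_nonneg (hwnn n)]
      exact hwpos n))
  have hsum : (fun n => ∑ i ∈ range n, (u (i+1) - u i - c * w i)) =o[atTop]
      (fun n => ∑ i ∈ range n, w i) := by
    apply hlo.sum_range hwnn
    apply tendsto_atTop_mono (fun n => (hsumw n).symm.le)
    exact (tendsto_pow_atTop (Nat.succ_ne_zero k)).comp tendsto_natCast_atTop_atTop
  have hsum2 : (fun n : ℕ => u n - u 0 - c * (n:ℝ)^(k+1)) =o[atTop] (fun n : ℕ => (n:ℝ)^(k+1)) := by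
    have heq : ∀ n : ℕ, ∑ i ∈ range n, (u (i+1) - u i - c * w i) = u n - u 0 - c * (n:ℝ)^(k+1) := by
      intro n
      rw [Finset.sum_sub_distrib, Finset.sum_range_sub u n, ← Finset.mul_sum, hsumw n]
    rw [show (fun n : ℕ => u n - u 0 - c * (n:ℝ)^(k+1))
        = fun n => ∑ i ∈ range n, (u (i+1) - u i - c * w i) from funext fun n => (heq n).symm]
    apply hsum.trans_isBigO
    apply isBigO_of_le
    intro n
    rw [hsumw n]
  have htz : Tendsto (fun n : ℕ => (u n - u 0 - c * (n:ℝ)^(k+1)) / (n:ℝ)^(k+1)) atTop (𝓝 0) := by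
    rw [← isLittleO_iff_tendsto']
    · exact hsum2
    · filter_upwards [eventually_ge_atTop 1] with n hn hn0
      exact absurd hn0 (by positivity)
  have hu0 : Tendsto (fun n : ℕ => u 0 / (n:ℝ)^(k+1)) atTop (𝓝 0) := by
    apply Tendsto.div_atTop tendsto_const_nhds
    exact (tendsto_pow_atTop (Nat.succ_ne_zero k)).comp tendsto_natCast_atTop_atTop
  have hfin := (htz.add hu0).add (tendsto_const_nhds (x := c) (f := atTop (α := ℕ)))
  rw [zero_add, zero_add] at hfin
  apply hfin.congr'
  filter_upwards [eventually_ge_atTop 1] with n hn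
  have hpos : (0:ℝ) < (n:ℝ)^(k+1) := by positivity
  field_simp
  ring

lemma binPMF_top (N : ℕ) (p : ℝ) : binPMF N p (N+1) = 0 := by
  simp [binPMF, Nat.choose_succ_self]

lemma binPMF_succ_succ (N k : ℕ) (p : ℝ) (hk : k ≤ N) :
    binPMF (N+1) p (k+1) = p * binPMF N p k + (1-p) * binPMF N p (k+1) := by
  rcases eq_or_lt_of_le hk with h | h
  · subst h
    simp [binPMF, Nat.choose_succ_self, Nat.choose_self]
    ring
  · unfold binPMF
    rw [Nat.choose_succ_succ]
    have h1 : N + 1 - (k+1) = N - k := by omega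
    have h2 : N - k = (N - (k+1)) + 1 := by omega
    rw [h1, h2]
    push_cast
    ring

lemma binExp_succ (N : ℕ) (p : ℝ) (f : ℕ → ℝ) :
    binExp (N+1) p f = (1-p) * binExp N p f + p * binExp N p (fun k => f (k+1)) := by
  unfold binExp
  rw [Finset.sum_range_succ' (fun k => binPMF (N+1) p k * f k) (N+1)]
  have hs : ∀ k ∈ range (N+1), binPMF (N+1) p (k+1) * f (k+1)
      = p * (binPMF N p k * f (k+1)) + (1-p) * (binPMF N p (k+1) * f (k+1)) := by
    intro k hk
    rw [binPMF_succ_succ N k p (Nat.lt_succ_iff.mp (mem_range.mp hk))]; ring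
  rw [Finset.sum_congr rfl hs, Finset.sum_add_distrib, ← Finset.mul_sum, ← Finset.mul_sum]
  have key : ∑ k ∈ range (N+1), binPMF N p (k+1) * f (k+1) + binPMF N p 0 * f 0
      = ∑ k ∈ range (N+1), binPMF N p k * f k := by
    rw [← Finset.sum_range_succ' (fun k => binPMF N p k * f k) (N+1),
      Finset.sum_range_succ]
    simp [binPMF_top]
  have h0 : binPMF (N+1) p 0 = (1-p) * binPMF N p 0 := by
    simp [binPMF]; ring
  rw [h0]
  linear_combination (1-p) * key

lemma binExp_comb (N : ℕ) (p a b : ℝ) (g h : ℕ → ℝ) :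
    a * binExp N p g + b * binExp N p h = binExp N p (fun k => a * g k + b * h k) := by
  unfold binExp
  rw [Finset.mul_sum, Finset.mul_sum, ← Finset.sum_add_distrib]
  apply Finset.sum_congr rfl
  intro k _
  ring

lemma binExp_finset_sum (N : ℕ) (p : ℝ) (s : Finset ℕ) (g : ℕ → ℕ → ℝ) :
    binExp N p (fun k => ∑ j ∈ s, g j k) = ∑ j ∈ s, binExp N p (g j) := by
  unfold binExp
  rw [Finset.sum_comm]
  apply Finset.sum_congr rfl
  intro k _
  rw [Finset.mul_sum]

lemma binExp_const_mul (N : ℕ) (p c : ℝ) (f : ℕ → ℝ) :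
    binExp N p (fun k => c * f k) = c * binExp N p f := by
  unfold binExp
  rw [Finset.mul_sum]
  apply Finset.sum_congr rfl
  intro k _
  ring

lemma binPMF_sum (N : ℕ) (p : ℝ) : ∑ k ∈ range (N+1), binPMF N p k = 1 := by
  have h := add_pow p (1-p) N
  have h1 : p + (1-p) = 1 := by ring
  rw [h1, one_pow] at h
  rw [show (1:ℝ) = ∑ k ∈ range (N+1), p ^ k * (1-p) ^ (N-k) * (N.choose k : ℝ) from h]
  apply Finset.sum_congr rfl
  intro k _
  unfold binPMF
  ring

noncomputable def mu (p : ℝ) (t : ℕ) : ℝ := (1-p) * (-p)^t + p * (1-p)^t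

lemma mu_zero (p : ℝ) : mu p 0 = 1 := by simp [mu]
lemma mu_one (p : ℝ) : mu p 1 = 0 := by simp [mu]; ring
lemma mu_two (p : ℝ) : mu p 2 = p - p^2 := by simp [mu]; ring

lemma binExp_congr (N : ℕ) (p : ℝ) {f g : ℕ → ℝ} (h : ∀ k, f k = g k) :
    binExp N p f = binExp N p g := by
  unfold binExp
  exact Finset.sum_congr rfl fun k _ => by rw [h]

lemma expand_aux (p x : ℝ) (r : ℕ) :
    (1-p) * (x - p)^r + p * (x + (1-p))^r
      = ∑ j ∈ range (r+1), (Nat.choose r j : ℝ) * mu p (r-j) * x^j := by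
  have hx : x - p = x + (-p) := by ring
  rw [hx, add_pow x (-p) r, add_pow x (1-p) r,
    Finset.mul_sum, Finset.mul_sum, ← Finset.sum_add_distrib]
  apply Finset.sum_congr rfl
  intro j _
  unfold mu
  ring

noncomputable def cmom (p : ℝ) (r N : ℕ) : ℝ := binExp N p (fun k => ((k:ℝ) - N*p)^r)

lemma cmom_succ (p : ℝ) (r N : ℕ) :
    cmom p r (N+1) = ∑ j ∈ range (r+1), (Nat.choose r j : ℝ) * mu p (r-j) * cmom p j N := by
  unfold cmom
  rw [binExp_succ, binExp_comb]
  refine (binExp_congr N p (g := fun k : ℕ =>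
      ∑ j ∈ range (r+1), ((Nat.choose r j : ℝ) * mu p (r-j)) * ((k:ℝ) - N*p)^j) ?_).trans ?_
  · intro k
    have h1 : ((k:ℝ) - ((N+1:ℕ):ℝ)*p) = ((k:ℝ) - N*p) - p := by push_cast; ring
    have h2 : (((k+1:ℕ):ℝ) - ((N+1:ℕ):ℝ)*p) = ((k:ℝ) - N*p) + (1-p) := by push_cast; ring
    show (1-p) * ((k:ℝ) - ((N+1:ℕ):ℝ)*p)^r + p * ((((k+1:ℕ):ℝ)) - ((N+1:ℕ):ℝ)*p)^r = _
    rw [h1, h2, expand_aux]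
  · rw [binExp_finset_sum]
    exact Finset.sum_congr rfl fun j _ => binExp_const_mul ..

lemma cmom_succ_sub (p : ℝ) (r N : ℕ) (hr : 2 ≤ r) :
    cmom p r (N+1) - cmom p r N
      = ∑ j ∈ range (r-1), (Nat.choose r j : ℝ) * mu p (r-j) * cmom p j N := by
  rw [cmom_succ]
  have h1 : r + 1 = (r-1) + 1 + 1 := by omega
  rw [h1, Finset.sum_range_succ, Finset.sum_range_succ]
  have h2 : r - 1 + 1 = r := by omega
  have h3 : r - (r-1) = 1 := by omega
  rw [h2, h3, mu_one, Nat.choose_self, Nat.sub_self, mu_zero]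
  ring

lemma cmom_zero (p : ℝ) (N : ℕ) : cmom p 0 N = 1 := by
  unfold cmom
  have : (fun k : ℕ => ((k:ℝ) - N*p)^0) = fun _ => 1 := by funext k; simp
  rw [this]
  unfold binExp
  simpa using binPMF_sum N p

lemma cmom_one (p : ℝ) (N : ℕ) : cmom p 1 N = 0 := by
  induction N with
  | zero => simp [cmom, binExp, binPMF]
  | succ n ih =>
    rw [cmom_succ]
    rw [show (1:ℕ)+1 = 2 from rfl, Finset.sum_range_succ, Finset.sum_range_succ]
    simp [mu_one, mu_zero, ih]


noncomputable def Aval (p : ℝ) (m : ℕ) : ℝ :=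
  (Nat.factorial (2*m) : ℝ) / (2^m * (Nat.factorial m : ℝ)) * (p - p^2)^m

lemma exists_tendsto_sum {ι : Type*} (s : Finset ι) (f : ι → ℕ → ℝ)
    (h : ∀ i ∈ s, ∃ l, Tendsto (f i) atTop (𝓝 l)) :
    ∃ l, Tendsto (fun N => ∑ i ∈ s, f i N) atTop (𝓝 l) := by
  classical
  set g : ι → ℝ := fun i => if hx : ∃ l, Tendsto (f i) atTop (𝓝 l) then hx.choose else 0 with hg
  refine ⟨∑ i ∈ s, g i, tendsto_finset_sum _ fun i hi => ?_⟩
  have hx := h i hi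
  have : g i = hx.choose := by rw [hg]; simp [dif_pos hx]
  rw [this]
  exact hx.choose_spec

lemma cmom_div_tendsto_zero {p : ℝ} {j e : ℕ} {Lj : ℝ} (hje : j/2 < e)
    (hLj : Tendsto (fun N : ℕ => cmom p j N / (N:ℝ)^(j/2)) atTop (𝓝 Lj)) :
    Tendsto (fun N : ℕ => cmom p j N / (N:ℝ)^e) atTop (𝓝 0) := by
  have h2 : Tendsto (fun N : ℕ => ((N:ℝ)^(j/2) / (N:ℝ)^e)) atTop (𝓝 0) :=
    (tendsto_pow_div_pow_atTop_zero hje).comp tendsto_natCast_atTop_atTop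
  have h3 := hLj.mul h2
  rw [mul_zero] at h3
  apply h3.congr'
  filter_upwards [eventually_ge_atTop 1] with N hN
  have hne : ((N:ℝ)^(j/2)) ≠ 0 := by positivity
  field_simp

lemma Aval_succ (p : ℝ) (s : ℕ) :
    ((Nat.choose (2*(s+1)) (2*s) : ℝ) * mu p 2 * Aval p s) / ((s:ℝ)+1) = Aval p (s+1) := by
  have hch : (Nat.choose (2*(s+1)) (2*s) : ℝ) = ((2*s+2:ℕ):ℝ) * ((2*s+1:ℕ):ℝ) / 2 := by
    have h1 : 2*(s+1) = 2*s+2 := by ring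
    have h2 : (2*s+2).choose (2*s) = (2*s+2).choose 2 := by
      rw [show 2*s = 2*s+2 - 2 from by omega]
      exact Nat.choose_symm (by omega)
    rw [h1, h2, Nat.cast_choose_two]
    push_cast; ring
  unfold Aval
  rw [mu_two, hch]
  have hf1 : (Nat.factorial (2*(s+1)) : ℝ)
      = ((2*s+2:ℕ):ℝ) * ((2*s+1:ℕ):ℝ) * (Nat.factorial (2*s) : ℝ) := by
    have : 2*(s+1) = (2*s+1)+1 := by ring
    rw [this, Nat.factorial_succ, Nat.factorial_succ]
    push_cast; ring
  have hf2 : (Nat.factorial (s+1) : ℝ) = ((s:ℝ)+1) * (Nat.factorial s : ℝ) := by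
    rw [Nat.factorial_succ]; push_cast; ring
  rw [hf1, hf2]
  have hne1 : (Nat.factorial (2*s) : ℝ) ≠ 0 := Nat.cast_ne_zero.mpr (Nat.factorial_ne_zero _)
  have hne2 : (Nat.factorial s : ℝ) ≠ 0 := Nat.cast_ne_zero.mpr (Nat.factorial_ne_zero _)
  have hne3 : ((2:ℝ))^s ≠ 0 := by positivity
  have hne4 : ((s:ℝ)+1) ≠ 0 := by positivity
  field_simp
  push_cast
  ring

lemma cmom_main (p : ℝ) : ∀ r : ℕ, ∃ L : ℝ,
    Tendsto (fun N : ℕ => cmom p r N / (N:ℝ)^(r/2)) atTop (𝓝 L) ∧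
    ∀ m : ℕ, r = 2*m → L = Aval p m := by
  intro r
  induction r using Nat.strong_induction_on with
  | _ r IH =>
  match r, IH with
  | 0, _ =>
    refine ⟨1, ?_, ?_⟩
    · apply tendsto_const_nhds.congr
      intro N
      simp [cmom_zero]
    · intro m hm
      have : m = 0 := by omega
      subst this
      simp [Aval, Nat.factorial]
  | 1, _ =>
    refine ⟨0, ?_, ?_⟩
    · apply tendsto_const_nhds.congr
      intro N
      simp [cmom_one]
    · intro m hm; omega
  | (r+2), IH =>
    set r' := r + 2 with hr'
    have hr2 : 2 ≤ r' := by omega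
    set k := r' / 2 with hk
    have hk1 : 1 ≤ k := by omega
    obtain ⟨s, hs⟩ : ∃ s, k = s + 1 := ⟨k - 1, by omega⟩
    -- bound on j/2 for j in the recurrence sum
    have hjbound : ∀ j, j < r' - 1 → j / 2 ≤ s := by intro j hj; omega
    -- the difference sequence
    have hdiff : ∀ N : ℕ, cmom p r' (N+1) - cmom p r' N
        = ∑ j ∈ range (r'-1), (Nat.choose r' j : ℝ) * mu p (r'-j) * cmom p j N :=
      fun N => cmom_succ_sub p r' N hr2
    -- each summand over s-power has a limit
    have hterm : ∀ j ∈ range (r'-1), ∃ l, Tendsto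
        (fun N : ℕ => ((Nat.choose r' j : ℝ) * mu p (r'-j) * cmom p j N) / (N:ℝ)^s)
        atTop (𝓝 l) := by
      intro j hj
      have hjr : j < r' - 1 := mem_range.mp hj
      obtain ⟨Lj, hLj, -⟩ := IH j (by omega)
      rcases eq_or_lt_of_le (hjbound j hjr) with h | h
      · refine ⟨(Nat.choose r' j : ℝ) * mu p (r'-j) * Lj, ?_⟩
        rw [← h]
        have := hLj.const_mul ((Nat.choose r' j : ℝ) * mu p (r'-j))
        apply this.congr
        intro N
        ring
      · refine ⟨0, ?_⟩
        have := (cmom_div_tendsto_zero (p := p) h hLj).const_mul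
          ((Nat.choose r' j : ℝ) * mu p (r'-j))
        rw [mul_zero] at this
        apply this.congr
        intro N
        ring
    obtain ⟨M, hM⟩ := exists_tendsto_sum (range (r'-1)) _ hterm
    have hMd : Tendsto (fun N : ℕ => (cmom p r' (N+1) - cmom p r' N) / (N:ℝ)^s)
        atTop (𝓝 M) := by
      apply hM.congr
      intro N
      rw [hdiff N, Finset.sum_div]
    have hst := stolz hMd
    rw [show s + 1 = k from hs.symm] at hst
    refine ⟨M / ((s:ℝ)+1), hst, ?_⟩
    -- even case: compute the value
    intro m hm
    have hms : m = s + 1 := by omega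
    subst hms
    -- identify M
    have hMval : M = (Nat.choose r' (2*s) : ℝ) * mu p 2 * Aval p s := by
      -- recompute the limit of the sum with explicit value and use uniqueness
      have hsplit : r' - 1 = (2*s) + 1 := by omega
      have hlast : Tendsto
          (fun N : ℕ => ((Nat.choose r' (2*s) : ℝ) * mu p (r'-2*s) * cmom p (2*s) N) / (N:ℝ)^s)
          atTop (𝓝 ((Nat.choose r' (2*s) : ℝ) * mu p 2 * Aval p s)) := by
        obtain ⟨Ls, hLs, hLsval⟩ := IH (2*s) (by omega)
        have hval : Ls = Aval p s := hLsval s rfl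
        subst hval
        have h2 : r' - 2*s = 2 := by omega
        have h3 : (2*s)/2 = s := by omega
        rw [h3] at hLs
        rw [h2]
        have := hLs.const_mul ((Nat.choose r' (2*s) : ℝ) * mu p 2)
        apply this.congr
        intro N
        ring
      have hrest : Tendsto
          (fun N : ℕ => ∑ j ∈ range (2*s),
            ((Nat.choose r' j : ℝ) * mu p (r'-j) * cmom p j N) / (N:ℝ)^s)
          atTop (𝓝 0) := by
        have h0 : (0:ℝ) = ∑ j ∈ range (2*s), (0:ℝ) := by simp
        rw [h0]
        apply tendsto_finset_sum
        intro j hj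
        have hjr : j < 2*s := mem_range.mp hj
        obtain ⟨Lj, hLj, -⟩ := IH j (by omega)
        have hjs : j/2 < s := by omega
        have := (cmom_div_tendsto_zero (p := p) hjs hLj).const_mul
          ((Nat.choose r' j : ℝ) * mu p (r'-j))
        rw [mul_zero] at this
        apply this.congr
        intro N
        ring
      have hsum2 : Tendsto (fun N : ℕ => ∑ j ∈ range (r'-1),
          ((Nat.choose r' j : ℝ) * mu p (r'-j) * cmom p j N) / (N:ℝ)^s)
          atTop (𝓝 ((Nat.choose r' (2*s) : ℝ) * mu p 2 * Aval p s)) := by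
        rw [hsplit]
        have := hrest.add hlast
        rw [zero_add] at this
        apply this.congr
        intro N
        rw [Finset.sum_range_succ]
      exact tendsto_nhds_unique hM hsum2
    rw [hMval]
    have hreq : r' = 2*(s+1) := by omega
    rw [hreq]
    exact Aval_succ p s

/-- For `ξ_N ∼ Binomial(N, p)`, `N^{-m} E[(ξ_N - Np)^{2m}] → (2m-1)!! (p - p²)^m`. -/
theorem binomial_central_moment_limit (m : ℕ) (p : ℝ) (hp0 : 0 < p) (hp1 : p < 1) :
    Tendsto
      (fun N : ℕ => binExp N p (fun k => ((k : ℝ) - N * p) ^ (2 * m)) / (N : ℝ) ^ m)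
      atTop
      (nhds ((Nat.factorial (2 * m) : ℝ) / (2 ^ m * (Nat.factorial m : ℝ)) *
        (p - p ^ 2) ^ m)) := by
  obtain ⟨L, hL, hval⟩ := cmom_main p (2*m)
  rw [hval m rfl] at hL
  rw [show (2*m)/2 = m from by omega] at hL
  exact hL
end
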